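/- Caterpillars satisfy HK: for every caterpillar T and every k ≥ 1, there exists a leaf ℓ of T such that |I^k_T(v)| ≤ |I^k_T(ℓ)| for every vertex v of T. -/

import Mathlib

open scoped Classical

variable {V : Type*}

/-- `P = p 1, p 2, …, p n` is an escape path in `G` (from `p 1` to `p n`):
a path in `G` whose last vertex `p n` has degree 1 and whose vertices
`p i` for `2 ≤ i ≤ n - 2` have degree 2. -/
def IsEscapePath [Fintype V] (G : SimpleGraph V) (n : ℕ) (p : ℕ → V) : Prop :=
  1 ≤ n ∧ Set.InjOn p (Set.Icc 1 n) ∧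
  (∀ i, 1 ≤ i → i < n → G.Adj (p i) (p (i + 1))) ∧
  G.degree (p n) = 1 ∧
  ∀ i, 2 ≤ i → i ≤ n - 2 → G.degree (p i) = 2

/-- The flip of the path `p 1, …, p n`: it maps `p i` to `p (n + 1 - i)` and
fixes every vertex outside the path. -/
noncomputable def flipP (n : ℕ) (p : ℕ → V) : V → V := fun x =>
  if h : ∃ i, 1 ≤ i ∧ i ≤ n ∧ p i = x then p (n + 1 - h.choose) else x

/-- `s` is an independent set of `G`. -/
def IndepSet (G : SimpleGraph V) (s : Set V) : Prop :=
  ∀ x ∈ s, ∀ y ∈ s, x ≠ y → ¬ G.Adj x y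

/-- The star `I^k_G(u)`: the family of independent `k`-subsets of `G`
containing the vertex `u`. -/
noncomputable def star [Fintype V] (G : SimpleGraph V) (k : ℕ) (u : V) :
    Finset (Finset V) :=
  Finset.univ.filter
    (fun A : Finset V => A.card = k ∧ u ∈ A ∧
      ∀ x ∈ A, ∀ y ∈ A, x ≠ y → ¬ G.Adj x y)

/-- A caterpillar: a finite tree (on at least two vertices) such that deleting all
leaves (vertices of degree 1) and their incident edges yields a path graph. -/
def IsCaterpillar [Fintype V] (G : SimpleGraph V) : Prop :=
  G.IsTree ∧ 2 ≤ Fintype.card V ∧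
    ∃ m : ℕ,
      Nonempty ((G.induce {v : V | G.degree v ≠ 1}) ≃g SimpleGraph.pathGraph m)

section flip
variable {n : ℕ} {p : ℕ → V}

lemma flipP_on (hinj : Set.InjOn p (Set.Icc 1 n)) {i : ℕ} (h1 : 1 ≤ i) (h2 : i ≤ n) :
    flipP n p (p i) = p (n + 1 - i) := by
  have hex : ∃ j, 1 ≤ j ∧ j ≤ n ∧ p j = p i := ⟨i, h1, h2, rfl⟩
  have hc := hex.choose_spec
  have : hex.choose = i := hinj ⟨hc.1, hc.2.1⟩ ⟨h1, h2⟩ hc.2.2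
  simp only [flipP, dif_pos hex, this]

lemma flipP_off {x : V} (h : ∀ i, 1 ≤ i → i ≤ n → p i ≠ x) :
    flipP n p x = x := by
  have : ¬ ∃ i, 1 ≤ i ∧ i ≤ n ∧ p i = x := by
    rintro ⟨i, h1, h2, h3⟩; exact h i h1 h2 h3
  simp only [flipP, dif_neg this]

lemma flipP_invol (hinj : Set.InjOn p (Set.Icc 1 n)) (x : V) : flipP n p (flipP n p x) = x := by
  by_cases hx : ∃ i, 1 ≤ i ∧ i ≤ n ∧ p i = x
  · obtain ⟨i, h1, h2, rfl⟩ := hx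
    rw [flipP_on hinj h1 h2, flipP_on hinj (by omega) (by omega)]
    congr 1; omega
  · push_neg at hx
    rw [flipP_off fun i a b => hx i a b, flipP_off fun i a b => hx i a b]
end flip

lemma mem_star_iff [Fintype V] {G : SimpleGraph V} {k : ℕ} {u : V} {A : Finset V} :
    A ∈ _root_.star G k u ↔ A.card = k ∧ u ∈ A ∧ ∀ x ∈ A, ∀ y ∈ A, x ≠ y → ¬ G.Adj x y := by
  simp [_root_.star]

lemma star_card_le_of_escape [Fintype V] (G : SimpleGraph V) {n : ℕ} {p : ℕ → V} (k : ℕ)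
    (hesc : IsEscapePath G n p)
    (hchord : ∀ i j, 1 ≤ i → i ≤ n → 1 ≤ j → j ≤ n →
      G.Adj (p i) (p j) → (j = i + 1 ∨ i = j + 1)) :
    (_root_.star G k (p 1)).card ≤ (_root_.star G k (p n)).card := by
  obtain ⟨hn, hinj, hadj, hdegn, hdeg2⟩ := hesc
  rcases eq_or_lt_of_le hn with h1 | h2
  · rw [← h1]
  -- now 2 ≤ n
  have hn2 : 2 ≤ n := h2
  -- neighborhood of p n
  have N2 : ∀ x, G.Adj (p n) x → x = p (n - 1) := by
    intro x hx
    have hadj' : G.Adj (p (n-1)) (p n) := by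
      have := hadj (n-1) (by omega) (by omega)
      rwa [show n - 1 + 1 = n by omega] at this
    have hm1 : p (n-1) ∈ G.neighborFinset (p n) := by
      rw [SimpleGraph.mem_neighborFinset]; exact hadj'.symm
    have hm2 : x ∈ G.neighborFinset (p n) := by
      rw [SimpleGraph.mem_neighborFinset]; exact hx
    exact Finset.card_le_one.mp (le_of_eq hdegn) x hm2 _ hm1
  -- neighborhood of interior vertices
  have N1 : ∀ j, 2 ≤ j → j ≤ n - 2 → ∀ x, G.Adj (p j) x →
      x = p (j - 1) ∨ x = p (j + 1) := by
    intro j hj1 hj2 x hx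
    have ha1 : G.Adj (p j) (p (j-1)) := by
      have := hadj (j-1) (by omega) (by omega)
      rw [show j - 1 + 1 = j by omega] at this
      exact this.symm
    have ha2 : G.Adj (p j) (p (j+1)) := hadj j (by omega) (by omega)
    have hne : p (j-1) ≠ p (j+1) := by
      intro h
      have := hinj (Set.mem_Icc.mpr ⟨by omega, by omega⟩)
        (Set.mem_Icc.mpr ⟨by omega, by omega⟩) h
      omega
    have hsub : insert (p (j-1)) {p (j+1)} ⊆ G.neighborFinset (p j) := by
      intro y hy
      rw [SimpleGraph.mem_neighborFinset]
      rcases Finset.mem_insert.mp hy with rfl | hy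
      · exact ha1
      · rw [Finset.mem_singleton] at hy; subst hy; exact ha2
    have hcard : (insert (p (j-1)) ({p (j+1)} : Finset V)).card = 2 := by
      rw [Finset.card_insert_of_notMem (by simpa using hne)]; simp
    have heq := Finset.eq_of_subset_of_card_le hsub
      (by rw [hcard]; exact le_of_eq (hdeg2 j hj1 hj2))
    have : x ∈ insert (p (j-1)) ({p (j+1)} : Finset V) := by
      rw [heq, SimpleGraph.mem_neighborFinset]; exact hx
    simpa using this
  set f := flipP n p with hf
  -- the key independence-preservation fact
  have key : ∀ A : Finset V, (p 1) ∈ A →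
      (∀ x ∈ A, ∀ y ∈ A, x ≠ y → ¬ G.Adj x y) →
      ∀ a ∈ A, ∀ b ∈ A, ¬ G.Adj (f a) (f b) := by
    intro A h1A hind
    -- mixed case helper
    have mixed : ∀ i, 1 ≤ i → i ≤ n → p i ∈ A →
        ∀ b ∈ A, (∀ j, 1 ≤ j → j ≤ n → p j ≠ b) → ¬ G.Adj (f (p i)) b := by
      intro i hi1 hi2 hiA b hbA hboff hadjb
      rw [hf, flipP_on hinj hi1 hi2] at hadjb
      set j := n + 1 - i with hj
      have hjr : 1 ≤ j ∧ j ≤ n := by omega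
      have hcases : j = 1 ∨ j = n ∨ (3 ≤ n ∧ j = n - 1) ∨ (2 ≤ j ∧ j ≤ n - 2) := by omega
      rcases hcases with hc | hc | hc | hc
      · -- Adj (p 1) b with both in A
        rw [hc] at hadjb
        exact hind (p 1) h1A b hbA (fun h => hboff 1 le_rfl (by omega) h) hadjb
      · rw [hc] at hadjb
        exact hboff (n-1) (by omega) (by omega) (N2 b hadjb).symm
      · -- j = n - 1, so i = 2 : p 1 and p 2 both in A, adjacent
        have hi : i = 2 := by omega
        have : p i ∈ A := hiA
        refine hind (p 1) h1A (p i) hiA ?_ ?_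
        · intro h
          have := hinj (Set.mem_Icc.mpr ⟨le_rfl, by omega⟩)
            (Set.mem_Icc.mpr ⟨by omega, by omega⟩) h
          omega
        · rw [hi]; exact hadj 1 le_rfl (by omega)
      · rcases N1 j hc.1 hc.2 b hadjb with h | h
        · exact hboff (j-1) (by omega) (by omega) h.symm
        · exact hboff (j+1) (by omega) (by omega) h.symm
    intro a haA b hbA hadjab
    by_cases ha : ∃ i, 1 ≤ i ∧ i ≤ n ∧ p i = a
    · obtain ⟨i, hi1, hi2, rfl⟩ := ha
      by_cases hb : ∃ j, 1 ≤ j ∧ j ≤ n ∧ p j = b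
      · -- both on the path
        obtain ⟨j, hj1, hj2, rfl⟩ := hb
        rw [hf, flipP_on hinj hi1 hi2, flipP_on hinj hj1 hj2] at hadjab
        have := hchord (n+1-i) (n+1-j) (by omega) (by omega) (by omega) (by omega) hadjab
        have hij : i = j + 1 ∨ j = i + 1 := by omega
        rcases hij with h | h
        · subst h
          refine hind (p j) hbA (p (j+1)) haA ?_ (hadj j hj1 (by omega))
          intro h
          have := hinj (Set.mem_Icc.mpr ⟨hj1, hj2⟩)
            (Set.mem_Icc.mpr ⟨by omega, by omega⟩) h
          omega
        · subst h
          refine hind (p i) haA (p (i+1)) hbA ?_ (hadj i hi1 (by omega))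
          intro h
          have := hinj (Set.mem_Icc.mpr ⟨hi1, hi2⟩)
            (Set.mem_Icc.mpr ⟨by omega, by omega⟩) h
          omega
      · push_neg at hb
        have hbf : f b = b := flipP_off (fun j a b => hb j a b)
        rw [hbf] at hadjab
        exact mixed i hi1 hi2 haA b hbA (fun j a b => hb j a b) hadjab
    · push_neg at ha
      have haf : f a = a := flipP_off (fun i u v => ha i u v)
      rw [haf] at hadjab
      by_cases hb : ∃ j, 1 ≤ j ∧ j ≤ n ∧ p j = b
      · obtain ⟨j, hj1, hj2, rfl⟩ := hb
        exact mixed j hj1 hj2 hbA a haA (fun i u v => ha i u v) hadjab.symm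
      · push_neg at hb
        have hbf : f b = b := flipP_off (fun j u v => hb j u v)
        rw [hbf] at hadjab
        exact hind a haA b hbA hadjab.ne hadjab
  -- the injection
  have finj : Function.Injective f := by
    intro x y h
    have := congrArg f h
    rwa [hf, flipP_invol hinj, flipP_invol hinj] at this
  apply Finset.card_le_card_of_injOn (fun A => A.image f)
  · intro A hA
    rw [Finset.mem_coe, mem_star_iff] at hA ⊢
    obtain ⟨hcard, hmem, hind⟩ := hA
    refine ⟨by rw [Finset.card_image_of_injective _ finj, hcard], ?_, ?_⟩
    · have : f (p 1) = p n := by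
        rw [hf, flipP_on hinj le_rfl hn]
        congr 1
      rw [← this]
      exact Finset.mem_image_of_mem f hmem
    · intro x hx y hy hne
      obtain ⟨a, haA, rfl⟩ := Finset.mem_image.mp hx
      obtain ⟨b, hbA, rfl⟩ := Finset.mem_image.mp hy
      exact key A hmem hind a haA b hbA
  · intro A hA B hB h
    have hinv : ∀ C : Finset V, (C.image f).image f = C := by
      intro C
      rw [Finset.image_image]
      have : ∀ x ∈ C, (f ∘ f) x = id x := fun x _ => flipP_invol hinj x
      rw [Finset.image_congr this, Finset.image_id]
    rw [← hinv A, ← hinv B]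
    simp only [h]

open SimpleGraph in
lemma pathdeg_interior {m : ℕ} (a : Fin m) (h0 : 0 < a.val) (h1 : a.val < m - 1) :
    (pathGraph m).degree a = 2 := by
  have hm : 3 ≤ m := by omega
  have : (pathGraph m).neighborFinset a =
      insert (⟨a.val - 1, by omega⟩ : Fin m) {(⟨a.val + 1, by omega⟩ : Fin m)} := by
    ext b
    simp only [mem_neighborFinset, pathGraph_adj, Finset.mem_insert, Finset.mem_singleton,
      Fin.ext_iff]
    omega
  rw [SimpleGraph.degree, this]
  rw [Finset.card_insert_of_notMem (by simp only [Finset.mem_singleton, Fin.ext_iff]; omega)]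
  simp

open SimpleGraph in
lemma pathdeg_end {m : ℕ} (a : Fin m) (hm : 2 ≤ m) (h : a.val = 0 ∨ a.val = m - 1) :
    (pathGraph m).degree a = 1 := by
  rcases h with h | h
  · have : (pathGraph m).neighborFinset a = {(⟨1, by omega⟩ : Fin m)} := by
      ext b
      simp only [mem_neighborFinset, pathGraph_adj, Finset.mem_singleton, Fin.ext_iff]
      omega
    rw [SimpleGraph.degree, this, Finset.card_singleton]
  · have : (pathGraph m).neighborFinset a = {(⟨m - 2, by omega⟩ : Fin m)} := by
      ext b
      simp only [mem_neighborFinset, pathGraph_adj, Finset.mem_singleton, Fin.ext_iff]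
      omega
    rw [SimpleGraph.degree, this, Finset.card_singleton]

open SimpleGraph in
lemma pathdeg_single {m : ℕ} (a : Fin m) (hm : m = 1) : (pathGraph m).degree a = 0 := by
  subst hm
  have : (pathGraph 1).neighborFinset a = ∅ := by
    ext b
    simp only [mem_neighborFinset, pathGraph_adj, Finset.notMem_empty, iff_false]
    omega
  rw [SimpleGraph.degree, this, Finset.card_empty]

open SimpleGraph in
lemma deg_transfer [Fintype V] {G : SimpleGraph V} {m : ℕ}
    (e : (G.induce {v : V | G.degree v ≠ 1}) ≃g SimpleGraph.pathGraph m)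
    (v : V) (hv : v ∈ {v : V | G.degree v ≠ 1}) (hall : ∀ x, G.Adj v x → G.degree x ≠ 1) :
    G.degree v = (pathGraph m).degree (e ⟨v, hv⟩) := by
  rw [SimpleGraph.degree, SimpleGraph.degree]
  refine Finset.card_bij
    (fun x hx => e ⟨x, hall x ((G.mem_neighborFinset _ _).mp hx)⟩) ?_ ?_ ?_
  · intro x hx
    rw [mem_neighborFinset] at hx ⊢
    rw [e.map_adj_iff]
    exact hx
  · intro x hx y hy h
    have := e.injective h
    exact Subtype.ext_iff.mp this
  · intro b hb
    rw [mem_neighborFinset] at hb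
    have hb' : (G.induce {v : V | G.degree v ≠ 1}).Adj ⟨v, hv⟩ (e.symm b) := by
      rw [← e.map_adj_iff]
      simpa using hb
    have hadj : G.Adj v ↑(e.symm b) := hb'
    refine ⟨↑(e.symm b), (G.mem_neighborFinset _ _).mpr hadj, ?_⟩
    show e ⟨↑(e.symm b), _⟩ = b
    have : (⟨↑(e.symm b), hall _ hadj⟩ : {v : V | G.degree v ≠ 1}) = e.symm b :=
      Subtype.ext rfl
    rw [this]
    exact e.apply_symm_apply b

open SimpleGraph in
lemma exists_good_path [Fintype V] {G : SimpleGraph V} {m : ℕ}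
    (e : (G.induce {v : V | G.degree v ≠ 1}) ≃g SimpleGraph.pathGraph m)
    (v : V) (hv : G.degree v ≠ 1) (hpos : 0 < G.degree v) :
    ∃ (n : ℕ) (p : ℕ → V), IsEscapePath G n p ∧ p 1 = v ∧
      ∀ i j, 1 ≤ i → i ≤ n → 1 ≤ j → j ≤ n →
        G.Adj (p i) (p j) → (j = i + 1 ∨ i = j + 1) := by
  by_cases hleaf : ∃ ℓ, G.Adj v ℓ ∧ G.degree ℓ = 1
  · -- v has a leaf neighbor: take the path v, ℓ
    obtain ⟨ℓ, hadjvl, hdegl⟩ := hleaf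
    set p : ℕ → V := fun i => if i ≤ 1 then v else ℓ with hpdef
    have hp1 : p 1 = v := by simp [hpdef]
    have hp2 : p 2 = ℓ := by simp [hpdef]
    have hne : v ≠ ℓ := hadjvl.ne
    have hpval : ∀ i, 1 ≤ i → i ≤ 2 → p i = v ∨ p i = ℓ := by
      intro i h1 h2
      rcases (by omega : i = 1 ∨ i = 2) with rfl | rfl
      · left; exact hp1
      · right; exact hp2
    refine ⟨2, p, ⟨by norm_num, ?_, ?_, ?_, ?_⟩, hp1, ?_⟩
    · intro a ha b hb hab
      rw [Set.mem_Icc] at ha hb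
      rcases (by omega : a = 1 ∨ a = 2) with rfl | rfl <;>
        rcases (by omega : b = 1 ∨ b = 2) with rfl | rfl <;>
        simp_all
    · intro i h1 h2
      have : i = 1 := by omega
      subst this
      rw [hp1, hp2]
      exact hadjvl
    · rw [hp2]; exact hdegl
    · intro i h1 h2; omega
    · intro i j hi1 hi2 hj1 hj2 hadj
      rcases (by omega : i = 1 ∨ i = 2) with rfl | rfl <;>
        rcases (by omega : j = 1 ∨ j = 2) with rfl | rfl
      · exact absurd rfl hadj.ne
      · omega
      · omega
      · exact absurd rfl hadj.ne
  · push_neg at hleaf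
    have hvS : v ∈ {v : V | G.degree v ≠ 1} := hv
    set t : Fin m := e ⟨v, hvS⟩ with htdef
    set σ' : ℕ → V := fun s => if h : s < m then (↑(e.symm ⟨s, h⟩) : V) else v with hσdef
    have hσval : ∀ s (h : s < m), σ' s = ↑(e.symm ⟨s, h⟩) := by
      intro s h; rw [hσdef]; exact dif_pos h
    have hσS : ∀ s, σ' s ∈ {v : V | G.degree v ≠ 1} := by
      intro s
      by_cases h : s < m
      · rw [hσval s h]; exact (e.symm ⟨s, h⟩).2
      · have : σ' s = v := by rw [hσdef]; exact dif_neg h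
        rw [this]; exact hvS
    have hσdeg : ∀ s, G.degree (σ' s) ≠ 1 := hσS
    have hσt : σ' t.val = v := by
      rw [hσval t.val t.isLt]
      have : (⟨t.val, t.isLt⟩ : Fin m) = t := rfl
      rw [this, htdef, e.symm_apply_apply]
    have hσadj : ∀ s r (hs : s < m) (hr : r < m), (s + 1 = r ∨ r + 1 = s) →
        G.Adj (σ' s) (σ' r) := by
      intro s r hs hr hsr
      rw [hσval s hs, hσval r hr]
      have : (G.induce {v : V | G.degree v ≠ 1}).Adj (e.symm ⟨s, hs⟩) (e.symm ⟨r, hr⟩) := by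
        rw [Iso.map_adj_iff, pathGraph_adj]
        exact hsr
      exact this
    have hσadj_iff : ∀ s r (hs : s < m) (hr : r < m), G.Adj (σ' s) (σ' r) →
        (s + 1 = r ∨ r + 1 = s) := by
      intro s r hs hr hadj
      rw [hσval s hs, hσval r hr] at hadj
      have : (G.induce {v : V | G.degree v ≠ 1}).Adj (e.symm ⟨s, hs⟩) (e.symm ⟨r, hr⟩) := hadj
      rw [Iso.map_adj_iff, pathGraph_adj] at this
      exact this
    have hσinj : ∀ s r, s < m → r < m → σ' s = σ' r → s = r := by
      intro s r hs hr h
      rw [hσval s hs, hσval r hr] at h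
      have := e.symm.injective (Subtype.ext h)
      exact Fin.mk.inj_iff.mp this
    have htrans := deg_transfer e v hvS hleaf
    have hpd : (pathGraph m).degree t ≠ 1 := by rw [← htrans]; exact hv
    have hpdpos : 0 < (pathGraph m).degree t := by rw [← htrans]; exact hpos
    have hm2 : 2 ≤ m := by
      rcases (by omega : m = 0 ∨ m = 1 ∨ 2 ≤ m) with h | h | h
      · exact absurd (h ▸ t).isLt (by omega)
      · rw [pathdeg_single t h] at hpdpos; omega
      · exact h
    have htint : t.val < m - 1 := by
      by_contra h
      have : t.val = m - 1 := by have := t.isLt; omega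
      exact hpd (pathdeg_end t hm2 (Or.inr this))
    -- the transfer lemma for other spine vertices
    have htrans' : ∀ s (hs : s < m), (∀ x, G.Adj (σ' s) x → G.degree x ≠ 1) →
        G.degree (σ' s) = (pathGraph m).degree ⟨s, hs⟩ := by
      intro s hs hall
      have h1 := deg_transfer e (σ' s) (hσS s) hall
      have h2 : (⟨σ' s, hσS s⟩ : {v : V | G.degree v ≠ 1}) = e.symm ⟨s, hs⟩ :=
        Subtype.ext (hσval s hs)
      rw [h1, h2, e.apply_symm_apply]
    set P : ℕ → Prop := fun s => t.val < s ∧ s < m ∧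
      ∃ x, G.Adj (σ' s) x ∧ G.degree x = 1 with hPdef
    have hex : ∃ s, P s := by
      refine ⟨m - 1, by omega, by omega, ?_⟩
      by_contra h
      push_neg at h
      have h2 := htrans' (m-1) (by omega) (fun x hx => fun h1 => (h x hx h1).elim)
      rw [pathdeg_end ⟨m-1, by omega⟩ hm2 (Or.inr rfl)] at h2
      exact hσdeg (m-1) h2
    set s₀ := Nat.find hex with hs₀def
    have hPs₀ : P s₀ := Nat.find_spec hex
    have hmin : ∀ r, r < s₀ → ¬ P r := fun r hr => Nat.find_min hex hr
    obtain ⟨hts₀, hs₀m, ℓ₀, hadjℓ, hdegℓ⟩ := hPs₀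
    -- unique neighbor of the leaf ℓ₀
    have huniq : ∀ x, G.Adj x ℓ₀ → x = σ' s₀ := by
      intro x hx
      have h1 : x ∈ G.neighborFinset ℓ₀ := by
        rw [mem_neighborFinset]; exact hx.symm
      have h2 : σ' s₀ ∈ G.neighborFinset ℓ₀ := by
        rw [mem_neighborFinset]; exact hadjℓ.symm
      exact Finset.card_le_one.mp (le_of_eq hdegℓ) x h1 _ h2
    set n := s₀ - t.val + 2 with hndef
    have hn3 : 3 ≤ n := by omega
    set p : ℕ → V := fun i => if i ≤ n - 1 then σ' (t.val + i - 1) else ℓ₀ with hpdef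
    have hpval : ∀ i, i ≤ n - 1 → p i = σ' (t.val + i - 1) := by
      intro i h; rw [hpdef]; exact if_pos h
    have hpn : p n = ℓ₀ := by rw [hpdef]; exact if_neg (by omega)
    have hidx : ∀ i, 1 ≤ i → i ≤ n - 1 → t.val + i - 1 < m := by
      intro i h1 h2; omega
    have hp1 : p 1 = v := by
      rw [hpval 1 (by omega), show t.val + 1 - 1 = t.val by omega, hσt]
    refine ⟨n, p, ⟨by omega, ?_, ?_, ?_, ?_⟩, hp1, ?_⟩
    · -- InjOn
      intro a ha b hb hab
      rw [Set.mem_Icc] at ha hb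
      by_cases ha' : a ≤ n - 1 <;> by_cases hb' : b ≤ n - 1
      · rw [hpval a ha', hpval b hb'] at hab
        have := hσinj _ _ (hidx a ha.1 ha') (hidx b hb.1 hb') hab
        omega
      · have hbn : b = n := by omega
        rw [hpval a ha', hbn, hpn] at hab
        exact absurd (hab ▸ hσdeg (t.val + a - 1)) (by simp [hdegℓ])
      · have han : a = n := by omega
        rw [hpval b hb', han, hpn] at hab
        exact absurd (hab ▸ hdegℓ) (by simp [hσdeg (t.val + b - 1)])
      · omega
    · -- adjacency
      intro i h1 h2
      by_cases h : i < n - 1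
      · rw [hpval i (by omega), hpval (i+1) (by omega)]
        apply hσadj _ _ (hidx i h1 (by omega)) (hidx (i+1) (by omega) (by omega))
        omega
      · have hi : i = n - 1 := by omega
        rw [hpval i (by omega), show i + 1 = n by omega, hpn,
          show t.val + i - 1 = s₀ by omega]
        exact hadjℓ
    · rw [hpn]; exact hdegℓ
    · -- interior degrees
      intro i hi1 hi2
      rw [hpval i (by omega)]
      set r := t.val + i - 1 with hrdef
      have hrm : r < m := by omega
      have hno : ∀ x, G.Adj (σ' r) x → G.degree x ≠ 1 := by
        intro x hx hxd
        exact hmin r (by omega) ⟨by omega, hrm, x, hx, hxd⟩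
      rw [htrans' r hrm hno]
      exact pathdeg_interior ⟨r, hrm⟩ (by simp; omega) (by simp; omega)
    · -- chord-free
      intro i j hi1 hi2 hj1 hj2 hadj
      by_cases hi' : i ≤ n - 1 <;> by_cases hj' : j ≤ n - 1
      · rw [hpval i hi', hpval j hj'] at hadj
        have := hσadj_iff _ _ (hidx i hi1 hi') (hidx j hj1 hj') hadj
        omega
      · have hjn : j = n := by omega
        rw [hpval i hi', hjn, hpn] at hadj
        have := huniq _ hadj
        have := hσinj _ _ (hidx i hi1 hi') hs₀m this
        omega
      · have hin : i = n := by omega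
        rw [hpval j hj', hin, hpn] at hadj
        have := huniq _ hadj.symm
        have := hσinj _ _ (hidx j hj1 hj') hs₀m this
        omega
      · have : i = n ∧ j = n := by omega
        rw [this.1, this.2] at hadj
        exact absurd rfl hadj.ne

/-- caterpillars satisfy HK: for every `k ≥ 1` there is a leaf `ℓ`
whose star `I^k_T(ℓ)` is at least as large as every star `I^k_T(v)`. -/
theorem caterpillar_HK [Fintype V] (G : SimpleGraph V)
    (hG : IsCaterpillar G) (k : ℕ) (hk : 1 ≤ k) :
    ∃ ℓ : V, G.degree ℓ = 1 ∧
      ∀ v : V, (star G k v).card ≤ (star G k ℓ).card := by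
  obtain ⟨htree, hcard, m, ⟨e⟩⟩ := hG
  have hpos : ∀ v : V, 0 < G.degree v := by
    intro v
    rw [G.degree_pos_iff_exists_adj]
    obtain ⟨u, hu⟩ := Fintype.exists_ne_of_one_lt_card (by omega) v
    obtain ⟨w⟩ := htree.isConnected.preconnected v u
    cases w with
    | nil => exact absurd rfl hu
    | cons h _ => exact ⟨_, h⟩
  have hleaf : ∃ ℓ : V, G.degree ℓ = 1 := by
    by_contra h
    push_neg at h
    have h2 : ∀ v : V, 2 ≤ G.degree v := fun v => by
      have h3 := hpos v; have h4 := h v; omega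
    have hsum := G.sum_degrees_eq_twice_card_edges
    have hE := htree.card_edgeFinset
    have hle : Finset.univ.card • 2 ≤ ∑ v, G.degree v :=
      Finset.card_nsmul_le_sum Finset.univ (fun v => G.degree v) 2 (fun x _ => h2 x)
    rw [Finset.card_univ, smul_eq_mul] at hle
    omega
  obtain ⟨ℓ₁, hℓ₁⟩ := hleaf
  have hLne : (Finset.univ.filter (fun v => G.degree v = 1)).Nonempty :=
    ⟨ℓ₁, Finset.mem_filter.mpr ⟨Finset.mem_univ _, hℓ₁⟩⟩
  obtain ⟨ℓ, hℓL, hmax⟩ := Finset.exists_max_image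
    (Finset.univ.filter (fun v => G.degree v = 1))
    (fun v => (_root_.star G k v).card) hLne
  have hℓdeg : G.degree ℓ = 1 := (Finset.mem_filter.mp hℓL).2
  refine ⟨ℓ, hℓdeg, ?_⟩
  intro v
  by_cases hv : G.degree v = 1
  · exact hmax v (Finset.mem_filter.mpr ⟨Finset.mem_univ v, hv⟩)
  · obtain ⟨n, p, hesc, hp1, hchord⟩ := exists_good_path e v hv (hpos v)
    have h1 := star_card_le_of_escape G k hesc hchord
    rw [hp1] at h1
    have hpn : G.degree (p n) = 1 := hesc.2.2.2.1
    exact le_trans h1 (hmax (p n) (Finset.mem_filter.mpr ⟨Finset.mem_univ _, hpn⟩))
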